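/- Let S and B be finite types, and for each b : B let T b be a row-stochastic matrix on S with a unique stationary distribution μ b. Define the matrix T' on S × B by T' (s, b) (s', b') = (if b' = b then (T b) s s' else 0). Then for every stationary distribution μ' of T' there exists c : B → ℝ with c b ≥ 0 for all b such that μ' (s, b) = c b * μ b s for all s : S and b : B. -/

import Mathlib

theorem product_chain_stationary_decomposition {S B : Type*} [Fintype S] [Fintype B]
    [DecidableEq B]
    (T : B → Matrix S S ℝ)
    (hT0 : ∀ b s s', 0 ≤ T b s s') (hT1 : ∀ b s, ∑ s', T b s s' = 1)
    (μ : B → S → ℝ)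
    (hμ0 : ∀ b s, 0 ≤ μ b s) (hμ1 : ∀ b, ∑ s, μ b s = 1)
    (hμstat : ∀ b s, ∑ s', μ b s' * T b s' s = μ b s)
    (huniq : ∀ (b : B) (ν : S → ℝ), (∀ s, 0 ≤ ν s) → (∑ s, ν s = 1) →
      (∀ s, ∑ s', ν s' * T b s' s = ν s) → ν = μ b)
    (T' : Matrix (S × B) (S × B) ℝ)
    (hT' : ∀ (s s' : S) (b b' : B),
      T' (s, b) (s', b') = if b' = b then T b s s' else 0)
    (μ' : S × B → ℝ)
    (hμ'0 : ∀ x, 0 ≤ μ' x) (hμ'1 : ∑ x, μ' x = 1)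
    (hμ'stat : ∀ x, ∑ x', μ' x' * T' x' x = μ' x) :
    ∃ c : B → ℝ, (∀ b, 0 ≤ c b) ∧ ∀ (s : S) (b : B), μ' (s, b) = c b * μ b s := by
  refine ⟨fun b => ∑ s, μ' (s, b), fun b => Finset.sum_nonneg fun s _ => hμ'0 _, ?_⟩
  intro s b
  -- key: component-wise stationarity
  have hstat : ∀ s : S, ∑ s', μ' (s', b) * T b s' s = μ' (s, b) := by
    intro s
    have := hμ'stat (s, b)
    rw [← this, Fintype.sum_prod_type]
    refine Finset.sum_congr rfl fun s' _ => ?_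
    rw [Finset.sum_eq_single b]
    · rw [hT' s' s b b, if_pos rfl]
    · intro b' _ hb'
      rw [hT' s' s b' b, if_neg (Ne.symm hb'), mul_zero]
    · intro h; exact absurd (Finset.mem_univ b) h
  set c := ∑ s, μ' (s, b) with hc
  rcases eq_or_ne c 0 with h0 | h0
  · have : ∀ t ∈ Finset.univ, μ' (t, b) = 0 :=
      (Finset.sum_eq_zero_iff_of_nonneg fun t _ => hμ'0 _).mp h0
    show μ' (s, b) = c * μ b s
    rw [h0, zero_mul]; exact this s (Finset.mem_univ s)
  · have hceq : (fun t => μ' (t, b) / c) = μ b := by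
      apply huniq
      · intro t; exact div_nonneg (hμ'0 _) (Finset.sum_nonneg fun t _ => hμ'0 _)
      · rw [← Finset.sum_div, ← hc, div_self h0]
      · intro t
        rw [Finset.sum_congr rfl fun s' _ => (div_mul_eq_mul_div _ _ _),
          ← Finset.sum_div, hstat t]
    have h2 := congrFun hceq s
    show μ' (s, b) = c * μ b s
    rw [← h2, mul_div_cancel₀ _ h0]
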